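/- Define z : ℝ² → ℝ by z(x₁,x₂) := (1/64) ( cosh(2πx₁ − π)/cosh(π) − cos(2πx₁) ) sin(2πx₂), and f(x₁,x₂) := 8π² sin(2πx₁) sin(2πx₂). Then: (i) −Δz(x) = −(1/(128π)) ∂₁f(x) = −(π²/8) cos(2πx₁) sin(2πx₂) for every x ∈ ℝ²; (ii) z vanishes on the boundary of the square Ω := (0,1)², i.e., z(x) = 0 whenever x₁ ∈ {0,1} or x₂ ∈ {0,1}. -/

import Mathlib

/-- Partial derivative w.r.t. the first variable. -/
noncomputable def p1 (f : ℝ → ℝ → ℝ) : ℝ → ℝ → ℝ := fun x y => deriv (fun t => f t y) x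

/-- Partial derivative w.r.t. the second variable. -/
noncomputable def p2 (f : ℝ → ℝ → ℝ) : ℝ → ℝ → ℝ := fun x y => deriv (fun t => f x t) y

/-- The function `z`. -/
noncomputable def zz (x₁ x₂ : ℝ) : ℝ :=
  (1/64) * (Real.cosh (2 * Real.pi * x₁ - Real.pi) / Real.cosh Real.pi
    - Real.cos (2 * Real.pi * x₁)) * Real.sin (2 * Real.pi * x₂)

/-- The right-hand side `f`. -/
noncomputable def ff (x₁ x₂ : ℝ) : ℝ :=
  8 * Real.pi ^ 2 * Real.sin (2 * Real.pi * x₁) * Real.sin (2 * Real.pi * x₂)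

open Real

lemma hlin (x : ℝ) : HasDerivAt (fun t : ℝ => 2 * Real.pi * t - Real.pi) (2 * Real.pi) x := by
  simpa using ((hasDerivAt_id x).const_mul (2 * Real.pi)).sub_const Real.pi

lemma hlin' (x : ℝ) : HasDerivAt (fun t : ℝ => 2 * Real.pi * t) (2 * Real.pi) x := by
  simpa using (hasDerivAt_id x).const_mul (2 * Real.pi)

lemma hc (x : ℝ) : HasDerivAt
    (fun t => Real.cosh (2 * Real.pi * t - Real.pi) / Real.cosh Real.pi
      - Real.cos (2 * Real.pi * t))
    (2 * Real.pi * Real.sinh (2 * Real.pi * x - Real.pi) / Real.cosh Real.pi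
      + 2 * Real.pi * Real.sin (2 * Real.pi * x)) x := by
  have h := (((hlin x).cosh).div_const (Real.cosh Real.pi)).sub ((hlin' x).cos)
  refine h.congr_deriv ?_
  ring

lemma hc' (x : ℝ) : HasDerivAt
    (fun t => 2 * Real.pi * Real.sinh (2 * Real.pi * t - Real.pi) / Real.cosh Real.pi
      + 2 * Real.pi * Real.sin (2 * Real.pi * t))
    (4 * Real.pi ^ 2 * Real.cosh (2 * Real.pi * x - Real.pi) / Real.cosh Real.pi
      + 4 * Real.pi ^ 2 * Real.cos (2 * Real.pi * x)) x := by
  have h1 : HasDerivAt (fun t => 2 * Real.pi * Real.sinh (2 * Real.pi * t - Real.pi) / Real.cosh Real.pi)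
      (2 * Real.pi * (Real.cosh (2 * Real.pi * x - Real.pi) * (2 * Real.pi)) / Real.cosh Real.pi) x := by
    simpa [mul_div_assoc] using (((hlin x).sinh).const_mul (2 * Real.pi)).div_const (Real.cosh Real.pi)
  have h2 := ((hlin' x).sin).const_mul (2 * Real.pi)
  have h := h1.add h2
  refine h.congr_deriv ?_
  ring

lemma p1zz (x y : ℝ) : p1 zz x y =
    (1/64) * (2 * Real.pi * Real.sinh (2 * Real.pi * x - Real.pi) / Real.cosh Real.pi
      + 2 * Real.pi * Real.sin (2 * Real.pi * x)) * Real.sin (2 * Real.pi * y) := by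
  unfold p1 zz
  exact (((hc x).const_mul (1/64)).mul_const _).deriv

lemma p1p1zz (x y : ℝ) : p1 (p1 zz) x y =
    (1/64) * (4 * Real.pi ^ 2 * Real.cosh (2 * Real.pi * x - Real.pi) / Real.cosh Real.pi
      + 4 * Real.pi ^ 2 * Real.cos (2 * Real.pi * x)) * Real.sin (2 * Real.pi * y) := by
  have : (fun t => p1 zz t y) = fun t =>
      (1/64) * (2 * Real.pi * Real.sinh (2 * Real.pi * t - Real.pi) / Real.cosh Real.pi
        + 2 * Real.pi * Real.sin (2 * Real.pi * t)) * Real.sin (2 * Real.pi * y) := by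
    funext t; exact p1zz t y
  show deriv (fun t => p1 zz t y) x = _
  rw [this]
  exact (((hc' x).const_mul (1/64)).mul_const _).deriv

lemma p2zz (x y : ℝ) : p2 zz x y =
    (1/64) * (Real.cosh (2 * Real.pi * x - Real.pi) / Real.cosh Real.pi
      - Real.cos (2 * Real.pi * x)) * (Real.cos (2 * Real.pi * y) * (2 * Real.pi)) := by
  unfold p2 zz
  exact (((hlin' y).sin).const_mul _).deriv

lemma p2p2zz (x y : ℝ) : p2 (p2 zz) x y =
    (1/64) * (Real.cosh (2 * Real.pi * x - Real.pi) / Real.cosh Real.pi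
      - Real.cos (2 * Real.pi * x)) * (-Real.sin (2 * Real.pi * y) * (2 * Real.pi) * (2 * Real.pi)) := by
  have heq : (fun t => p2 zz x t) = fun t =>
      (1/64) * (Real.cosh (2 * Real.pi * x - Real.pi) / Real.cosh Real.pi
        - Real.cos (2 * Real.pi * x)) * (Real.cos (2 * Real.pi * t) * (2 * Real.pi)) := by
    funext t; exact p2zz x t
  show deriv (fun t => p2 zz x t) y = _
  rw [heq]
  have h := ((((hlin' y).cos).mul_const (2 * Real.pi)).const_mul
    ((1/64) * (Real.cosh (2 * Real.pi * x - Real.pi) / Real.cosh Real.pi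
      - Real.cos (2 * Real.pi * x)))).deriv
  rw [h]

lemma p1ff (x y : ℝ) : p1 ff x y =
    8 * Real.pi ^ 2 * (Real.cos (2 * Real.pi * x) * (2 * Real.pi)) * Real.sin (2 * Real.pi * y) := by
  unfold p1 ff
  exact ((((hlin' x).sin).const_mul (8 * Real.pi ^ 2)).mul_const _).deriv

/-- `z` satisfies `−Δz = −(1/(128π)) ∂₁ f = −(π²/8) cos(2πx₁) sin(2πx₂)` on `ℝ²` and
vanishes on the boundary of the square `Ω = (0,1)²`. -/
theorem z_solves_poisson_problem :
    (∀ x₁ x₂ : ℝ,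
        -(p1 (p1 zz) x₁ x₂ + p2 (p2 zz) x₁ x₂) = -(1 / (128 * Real.pi)) * p1 ff x₁ x₂ ∧
        -(p1 (p1 zz) x₁ x₂ + p2 (p2 zz) x₁ x₂)
          = -(Real.pi ^ 2 / 8) * Real.cos (2 * Real.pi * x₁) * Real.sin (2 * Real.pi * x₂)) ∧
    (∀ x₁ x₂ : ℝ, (x₁ = 0 ∨ x₁ = 1 ∨ x₂ = 0 ∨ x₂ = 1) → zz x₁ x₂ = 0) := by
  have hpi : Real.pi ≠ 0 := Real.pi_ne_zero
  constructor
  · intro x₁ x₂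
    have key : -(p1 (p1 zz) x₁ x₂ + p2 (p2 zz) x₁ x₂)
        = -(Real.pi ^ 2 / 8) * Real.cos (2 * Real.pi * x₁) * Real.sin (2 * Real.pi * x₂) := by
      rw [p1p1zz, p2p2zz]
      ring
    refine ⟨?_, key⟩
    rw [key, p1ff]
    field_simp
    ring
  · intro x₁ x₂ h
    unfold zz
    rcases h with h | h | h | h <;> subst h
    · norm_num [Real.cosh_neg, div_self (ne_of_gt (Real.cosh_pos (x := Real.pi)))]
    · have : 2 * Real.pi * 1 - Real.pi = Real.pi := by ring
      rw [this]
      norm_num [div_self (ne_of_gt (Real.cosh_pos (x := Real.pi))), Real.cos_two_pi]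
    · norm_num
    · norm_num [Real.sin_two_pi]
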